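/- Let k ≥ 1 and let v_1^{(k)},…,v_{2^k}^{(k)} ∈ ℝ^{2^k−1} be the columns of the Walsh matrix W_k with its first row deleted. If w ∈ ℝ^{2^k−1} satisfies ‖v_ℓ^{(k)} − w‖_1 ≤ ‖v_ℓ^{(k)}‖_1 for all ℓ ∈ {1,…,2^k}, then w = 0. -/

import Mathlib

/-- Reindexing equivalence `Fin (2^k) ⊕ Fin (2^k) ≃ Fin (2^(k+1))`. -/
def walshEquiv (k : ℕ) : Fin (2 ^ k) ⊕ Fin (2 ^ k) ≃ Fin (2 ^ (k + 1)) :=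
  finSumFinEquiv.trans (finCongr (by rw [pow_succ, mul_two]))

/-- The Walsh matrices: `W 0 = (1)` and `W (k+1) = [[W k, W k],[W k, -W k]]`. -/
def walsh : (k : ℕ) → Matrix (Fin (2 ^ k)) (Fin (2 ^ k)) ℝ
  | 0 => fun _ _ => 1
  | k + 1 =>
    Matrix.reindex (walshEquiv k) (walshEquiv k)
      (Matrix.fromBlocks (walsh k) (walsh k) (walsh k) (-(walsh k)))

/-- The `ℓ`-th column of `W k` with its first row deleted, a vector in `ℝ^(2^k - 1)`. -/
def walshCol (k : ℕ) (ℓ : Fin (2 ^ k)) : Fin (2 ^ k - 1) → ℝ :=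
  fun r => walsh k (Fin.cast (Nat.sub_add_cancel Nat.one_le_two_pow) r.succ) ℓ

open scoped Matrix

lemma walshEquiv_inl_zero (k : ℕ) : walshEquiv k (Sum.inl 0) = 0 := by
  ext; simp [walshEquiv]

lemma walsh_zero_row (k : ℕ) (ℓ : Fin (2 ^ k)) : walsh k 0 ℓ = 1 := by
  induction k with
  | zero => rfl
  | succ k ih =>
    obtain ⟨x, rfl⟩ := (walshEquiv k).surjective ℓ
    rw [← walshEquiv_inl_zero k]
    cases x with
    | inl a => simpa [walsh] using ih a
    | inr a => simpa [walsh] using ih a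

lemma walsh_entry (k : ℕ) (i j : Fin (2 ^ k)) : walsh k i j = 1 ∨ walsh k i j = -1 := by
  induction k with
  | zero => left; rfl
  | succ k ih =>
    obtain ⟨x, rfl⟩ := (walshEquiv k).surjective i
    obtain ⟨y, rfl⟩ := (walshEquiv k).surjective j
    cases x with
    | inl a =>
      cases y with
      | inl b => simpa [walsh] using ih a b
      | inr b => simpa [walsh] using ih a b
    | inr a =>
      cases y with
      | inl b => simpa [walsh] using ih a b
      | inr b => rcases ih a b with h | h <;> simp [walsh, h]

lemma walsh_mul_transpose (k : ℕ) :
    walsh k * (walsh k)ᵀ = (2 ^ k : ℝ) • 1 := by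
  induction k with
  | zero =>
    ext i j
    fin_cases i; fin_cases j
    rw [Matrix.mul_apply]; simp only [Matrix.transpose_apply]; simp [walsh]
  | succ k ih =>
    show Matrix.reindex _ _ _ * (Matrix.reindex _ _ _)ᵀ = _
    rw [Matrix.transpose_reindex, Matrix.reindex_apply, Matrix.reindex_apply,
      Matrix.submatrix_mul_equiv, Matrix.fromBlocks_transpose, Matrix.fromBlocks_multiply]
    simp only [Matrix.transpose_neg, Matrix.neg_mul, Matrix.mul_neg, neg_neg, ih,
      add_neg_cancel]
    rw [show ((2:ℝ)^k • 1 + (2:ℝ)^k • 1 : Matrix (Fin (2^k)) (Fin (2^k)) ℝ) = (2:ℝ)^(k+1) • 1 by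
      rw [← add_smul]; congr 1; ring]
    rw [show (0 : Matrix (Fin (2^k)) (Fin (2^k)) ℝ) = (2:ℝ)^(k+1) • (0:Matrix (Fin (2^k)) (Fin (2^k)) ℝ) by simp]
    rw [← Matrix.fromBlocks_smul, Matrix.fromBlocks_one]
    ext i j
    simp [Matrix.submatrix_apply, Matrix.one_apply, Equiv.symm_apply_eq]

lemma walsh_row_sum (k : ℕ) (i : Fin (2 ^ k)) (hi : i ≠ 0) :
    ∑ ℓ, walsh k i ℓ = 0 := by
  have h := Matrix.ext_iff.2 (walsh_mul_transpose k) i 0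
  simp only [Matrix.mul_apply, Matrix.transpose_apply, walsh_zero_row, mul_one,
    Matrix.smul_apply, Matrix.one_apply, if_neg hi, smul_zero] at h
  exact h

theorem walsh_l1_center (k : ℕ) (hk : 1 ≤ k) (w : Fin (2 ^ k - 1) → ℝ)
    (hw : ∀ ℓ : Fin (2 ^ k),
      ∑ r, |walshCol k ℓ r - w r| ≤ ∑ r, |walshCol k ℓ r|) :
    w = 0 := by
  classical
  have hcast : (2 ^ k - 1) + 1 = 2 ^ k := Nat.sub_add_cancel Nat.one_le_two_pow
  let e : Fin ((2 ^ k - 1) + 1) ≃ Fin (2 ^ k) := finCongr hcast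
  have habs : ∀ (ℓ) (r : Fin (2 ^ k - 1)), |walshCol k ℓ r| = 1 := by
    intro ℓ r
    rcases walsh_entry k (Fin.cast (Nat.sub_add_cancel Nat.one_le_two_pow) r.succ) ℓ with h | h <;>
      simp [walshCol, h]
  have hdot : ∀ ℓ, 0 ≤ ∑ r, walshCol k ℓ r * w r := by
    intro ℓ
    have h1 : ∀ r, |walshCol k ℓ r| - walshCol k ℓ r * w r ≤ |walshCol k ℓ r - w r| := by
      intro r
      have hsq : walshCol k ℓ r * walshCol k ℓ r = |walshCol k ℓ r| := by
        rcases walsh_entry k (Fin.cast (Nat.sub_add_cancel Nat.one_le_two_pow) r.succ) ℓ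
          with h | h <;> simp [walshCol, h]
      calc |walshCol k ℓ r| - walshCol k ℓ r * w r
          = walshCol k ℓ r * (walshCol k ℓ r - w r) := by rw [← hsq]; ring
        _ ≤ |walshCol k ℓ r * (walshCol k ℓ r - w r)| := le_abs_self _
        _ = |walshCol k ℓ r - w r| := by rw [abs_mul, habs ℓ r, one_mul]
    have h3 : ∑ r, (|walshCol k ℓ r| - walshCol k ℓ r * w r) ≤ ∑ r, |walshCol k ℓ r| :=
      le_trans (Finset.sum_le_sum fun r _ => h1 r) (hw ℓ)
    rw [Finset.sum_sub_distrib] at h3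
    linarith
  have hzero : ∀ ℓ, ∑ r, walshCol k ℓ r * w r = 0 := by
    have htot : ∑ ℓ, ∑ r, walshCol k ℓ r * w r = 0 := by
      rw [Finset.sum_comm]
      apply Finset.sum_eq_zero
      intro r _
      have hne : Fin.cast (Nat.sub_add_cancel Nat.one_le_two_pow) r.succ ≠ (0 : Fin (2 ^ k)) := by
        intro h0
        have : (r : ℕ) + 1 = 0 := congrArg Fin.val h0
        omega
      have : ∑ ℓ, walshCol k ℓ r * w r
          = (∑ ℓ, walsh k (Fin.cast (Nat.sub_add_cancel Nat.one_le_two_pow) r.succ) ℓ) * w r := by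
        rw [Finset.sum_mul]; rfl
      rw [this, walsh_row_sum k _ hne, zero_mul]
    intro ℓ
    exact (Finset.sum_eq_zero_iff_of_nonneg (fun ℓ _ => hdot ℓ)).1 htot ℓ (Finset.mem_univ ℓ)
  -- extend w by a 0 in the first coordinate
  let wt : Fin (2 ^ k) → ℝ := fun j =>
    if h : (j : ℕ) = 0 then 0 else w ⟨(j : ℕ) - 1, by have := j.2; omega⟩
  have hwt_succ : ∀ r : Fin (2 ^ k - 1), wt (e r.succ) = w r := by
    intro r
    have hval : ((e r.succ : Fin (2 ^ k)) : ℕ) = (r : ℕ) + 1 := rfl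
    simp only [wt, hval]
    rw [dif_neg (by omega)]
    congr 1
  have hmv : (walsh k)ᵀ *ᵥ wt = 0 := by
    funext ℓ
    show ∑ j, (walsh k)ᵀ ℓ j * wt j = 0
    have hre : ∑ j, (walsh k)ᵀ ℓ j * wt j
        = ∑ j' : Fin ((2 ^ k - 1) + 1), (walsh k)ᵀ ℓ (e j') * wt (e j') :=
      (Fintype.sum_equiv e _ _ fun j' => rfl).symm
    rw [hre, Fin.sum_univ_succ]
    have he0 : e 0 = (0 : Fin (2 ^ k)) := by ext; rfl
    have hwt0 : wt (e 0) = 0 := by rw [he0]; rfl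
    have : ∀ r : Fin (2 ^ k - 1), (walsh k)ᵀ ℓ (e r.succ) * wt (e r.succ)
        = walshCol k ℓ r * w r := by
      intro r
      rw [hwt_succ r]
      rfl
    rw [hwt0, mul_zero, zero_add, Finset.sum_congr rfl fun r _ => this r, hzero ℓ]
  have h2 : (walsh k * (walsh k)ᵀ) *ᵥ wt = 0 := by
    rw [← Matrix.mulVec_mulVec, hmv, Matrix.mulVec_zero]
  rw [walsh_mul_transpose, Matrix.smul_mulVec, Matrix.one_mulVec] at h2
  have hwt : wt = 0 := by
    have h2k : (2 : ℝ) ^ k ≠ 0 := by positivity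
    rcases smul_eq_zero.1 h2 with h | h
    · exact absurd h h2k
    · exact h
  funext r
  have : wt (e r.succ) = 0 := by rw [hwt]; rfl
  rw [hwt_succ r] at this
  exact this
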